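/- Let 𝔽_q be a finite field with q elements and let P, Q ∈ 𝔽_q[X,Y] be polynomials with total degrees a = deg P and b = deg Q. For any 0 ≤ r, s < q, the Cartier operator Λ_{r,s} applied to the polynomial P·Q^{q-1} yields a polynomial (i.e., there is a polynomial R ∈ 𝔽_q[X,Y] whose associated power series equals Λ_{r,s}(P·Q^{q-1})) whose total degree satisfies q · deg(Λ_{r,s}(P·Q^{q-1})) ≤ a + b(q−1); in particular, if a + b ≥ 1 then deg(Λ_{r,s}(P·Q^{q-1})) < a + b. -/

import Mathlib

/-- The Cartier operator `Λ_{r,s}` on two-variable formal power series: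
`Λ_{r,s}(∑ a_{m,n} X^m Y^n) = ∑ a_{mq+r, nq+s} X^m Y^n`.  Two-variable power
series are encoded as `MvPowerSeries (Fin 2) F` (variable `0` is `X`,
variable `1` is `Y`). -/
noncomputable def cartier {F : Type*} [Field F] (q r s : ℕ)
    (A : MvPowerSeries (Fin 2) F) : MvPowerSeries (Fin 2) F :=
  fun d : Fin 2 →₀ ℕ =>
    MvPowerSeries.coeff (σ := Fin 2) (R := F)
      (Finsupp.single 0 (d 0 * q + r) + Finsupp.single 1 (d 1 * q + s)) A

/-- **Degree bound in the proof of Proposition 2 of the paper.**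
For polynomials `P, Q ∈ 𝔽_q[X,Y]` of total degrees `a` and `b`, the Cartier
operator applied to `P·Q^{q-1}` is (the power series of) a polynomial `R`
with `q · deg R ≤ a + b(q−1)`; in particular `deg R < a + b` when `a + b ≥ 1`. -/
theorem cartier_degree_bound
    (F : Type*) [Field F] [Fintype F] (q : ℕ) (hq : Fintype.card F = q)
    (r s : ℕ) (hr : r < q) (hs : s < q)
    (P Q : MvPolynomial (Fin 2) F) (a b : ℕ)
    (ha : P.totalDegree = a) (hb : Q.totalDegree = b) :
    ∃ R : MvPolynomial (Fin 2) F,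
      (R : MvPowerSeries (Fin 2) F)
          = cartier q r s ((P * Q ^ (q - 1) : MvPolynomial (Fin 2) F) :
              MvPowerSeries (Fin 2) F) ∧
      q * R.totalDegree ≤ a + b * (q - 1) ∧
      (1 ≤ a + b → R.totalDegree < a + b) := by
  have hq2 : 2 ≤ q := by
    rw [← hq]; exact Fintype.one_lt_card
  have hq0 : 0 < q := by omega
  set A : MvPolynomial (Fin 2) F := P * Q ^ (q - 1) with hA
  set φ : (Fin 2 →₀ ℕ) → (Fin 2 →₀ ℕ) :=
    fun d => Finsupp.single 0 (d 0 * q + r) + Finsupp.single 1 (d 1 * q + s) with hφdef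
  have hφ0 : ∀ d, φ d 0 = d 0 * q + r := by
    intro d; simp [hφdef, Finsupp.single_apply]
  have hφ1 : ∀ d, φ d 1 = d 1 * q + s := by
    intro d; simp [hφdef, Finsupp.single_apply]
  have hφ : Function.Injective φ := by
    intro d d' h
    have h0 : d 0 * q + r = d' 0 * q + r := by rw [← hφ0 d, ← hφ0 d', h]
    have h1 : d 1 * q + s = d' 1 * q + s := by rw [← hφ1 d, ← hφ1 d', h]
    ext i
    fin_cases i
    · have : d 0 = d' 0 := by
        have := Nat.eq_of_mul_eq_mul_right hq0 (by omega : d 0 * q = d' 0 * q)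
        exact this
      exact this
    · have : d 1 = d' 1 := by
        have := Nat.eq_of_mul_eq_mul_right hq0 (by omega : d 1 * q = d' 1 * q)
        exact this
      exact this
  have R : MvPolynomial (Fin 2) F := AddMonoidAlgebra.ofCoeff (Finsupp.comapDomain φ (AddMonoidAlgebra.coeff A) hφ.injOn)
  clear R
  refine ⟨(AddMonoidAlgebra.ofCoeff (Finsupp.comapDomain φ (AddMonoidAlgebra.coeff A) hφ.injOn) : MvPolynomial (Fin 2) F), ?_, ?_, ?_⟩
  · -- coefficients match
    ext d
    rfl
  all_goals {
    have hsum : ∀ e : Fin 2 →₀ ℕ, (e.sum fun _ n => n) = e 0 + e 1 := by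
      intro e
      rw [Finsupp.sum_fintype _ _ (fun _ => rfl)]
      exact Fin.sum_univ_two _
    have hAdeg : A.totalDegree ≤ a + b * (q - 1) := by
      calc A.totalDegree ≤ P.totalDegree + (Q ^ (q-1)).totalDegree :=
            MvPolynomial.totalDegree_mul _ _
        _ ≤ P.totalDegree + (q-1) * Q.totalDegree := by
            have := MvPolynomial.totalDegree_pow Q (q-1)
            omega
        _ = a + b * (q-1) := by rw [ha, hb, Nat.mul_comm]
    have hRdeg : MvPolynomial.totalDegree (AddMonoidAlgebra.ofCoeff (Finsupp.comapDomain φ (AddMonoidAlgebra.coeff A) hφ.injOn) : MvPolynomial (Fin 2) F)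
        ≤ (a + b * (q - 1)) / q := by
      apply Finset.sup_le
      intro d hd
      rw [hsum d]
      rw [Nat.le_div_iff_mul_le hq0]
      have hd' : MvPolynomial.coeff d (AddMonoidAlgebra.ofCoeff (Finsupp.comapDomain φ (AddMonoidAlgebra.coeff A) hφ.injOn) : MvPolynomial (Fin 2) F) ≠ 0 :=
        MvPolynomial.mem_support_iff.mp hd
      have hd'' : A.coeff (φ d) ≠ 0 := hd'
      have hmem : φ d ∈ A.support := MvPolynomial.mem_support_iff.mpr hd''
      have := MvPolynomial.le_totalDegree hmem
      rw [hsum (φ d), hφ0 d, hφ1 d] at this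
      have hle := le_trans this hAdeg
      nlinarith
    have key : q * MvPolynomial.totalDegree (AddMonoidAlgebra.ofCoeff (Finsupp.comapDomain φ (AddMonoidAlgebra.coeff A) hφ.injOn) : MvPolynomial (Fin 2) F)
        ≤ a + b * (q - 1) := by
      calc q * _ ≤ q * ((a + b * (q-1)) / q) := Nat.mul_le_mul_left q hRdeg
        _ ≤ a + b * (q-1) := Nat.mul_div_le _ _
    first
    | exact key
    | { intro hab
        by_contra hcon
        push_neg at hcon
        have h1 : q * (a + b) ≤ q * MvPolynomial.totalDegree (AddMonoidAlgebra.ofCoeff (Finsupp.comapDomain φ (AddMonoidAlgebra.coeff A) hφ.injOn) :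
            MvPolynomial (Fin 2) F) := Nat.mul_le_mul_left q hcon
        obtain ⟨k, rfl⟩ : ∃ k, q = k + 2 := ⟨q - 2, by omega⟩
        simp only [show k + 2 - 1 = k + 1 from rfl] at key
        nlinarith }
  }
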